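/- Let (C, s, ι) be a small category equipped with an endofunctor s and a natural transformation ι : id_C ⇒ s which is braidable, i.e. there exists a natural isomorphism Ψ : s∘s ⟶ s∘s such that ι ∗ id_s = Ψ ∘ (id_s ∗ ι). Let A be an abelian category. Then for any functor T : C → A one has deg(T∘s) ≤ deg(T), with equality if s is essentially surjective on objects. -/

import Mathlib

open CategoryTheory CategoryTheory.Limits

universe v u v' u' w z

variable {A : Type w} [Category.{z} A] [Abelian A]

/-- The natural transformation `T ∗ ι : T ⟶ s ⋙ T` induced by `ι : 𝟭 C ⟶ s`. -/
def stabMap {C : Type u} [Category.{v} C] (s : C ⥤ C) (ι : 𝟭 C ⟶ s) (T : C ⥤ A) :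
    T ⟶ s ⋙ T :=
  T.leftUnitor.inv ≫ Functor.whiskerRight ι T

/-- `degLE s ι d T` means `deg T ≤ d - 1`: `deg T ≤ -1` iff `T = 0`, and
`deg T ≤ d` iff `T = 0` or the cokernel of `T ∗ ι` has degree `≤ d - 1`. -/
def degLE {C : Type u} [Category.{v} C] (s : C ⥤ C) (ι : 𝟭 C ⟶ s) :
    ℕ → (C ⥤ A) → Prop
  | 0, T => IsZero T
  | d + 1, T => IsZero T ∨ degLE s ι d (cokernel (stabMap s ι T))

/-- The degree of a functor `T : C ⥤ A`, relative to the endofunctor `s : C ⥤ C`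
and natural transformation `ι : 𝟭 C ⟶ s`.  The degree takes values in
`{-1, 0, 1, …, ∞}`; we encode such a value `d` as `d + 1 : ℕ∞` (so `-1 ↦ 0`,
`∞ ↦ ⊤`), an order isomorphism, so inequalities and equalities of degrees are
faithfully represented. -/
noncomputable def deg {C : Type u} [Category.{v} C] (s : C ⥤ C) (ι : 𝟭 C ⟶ s)
    (T : C ⥤ A) : ℕ∞ :=
  sInf {e : ℕ∞ | ∃ d : ℕ, e = (d : ℕ∞) ∧ degLE s ι d T}

section Aux

variable {C : Type u} [Category.{v} C] (s : C ⥤ C) (ι : 𝟭 C ⟶ s)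

/-- `degLE` is invariant under isomorphism of functors. -/
lemma degLE_of_iso : ∀ (d : ℕ) {T₁ T₂ : C ⥤ A} (_ : T₁ ≅ T₂),
    degLE s ι d T₁ → degLE s ι d T₂ := by
  intro d
  induction d with
  | zero => intro T₁ T₂ e h; exact h.of_iso e.symm
  | succ d ih =>
    intro T₁ T₂ e h
    rcases h with h | h
    · exact Or.inl (h.of_iso e.symm)
    · refine Or.inr (ih ?_ h)
      refine cokernel.mapIso _ _ e (Functor.isoWhiskerLeft s e) ?_
      ext c
      simp [stabMap, e.hom.naturality]

instance : ((Functor.whiskeringLeft C C A).obj s).PreservesZeroMorphisms where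
  map_zero F G := by ext c; simp

/-- The key isomorphism: for braidable `ι`, the cokernel of `stabMap` for `s ⋙ T`
is isomorphic to `s` composed with the cokernel of `stabMap` for `T`. -/
noncomputable def cokerIso
    (Ψ : s ⋙ s ≅ s ⋙ s)
    (hΨ : ∀ c : C, s.map (ι.app c) ≫ Ψ.hom.app c = ι.app (s.obj c))
    (T : C ⥤ A) :
    cokernel (stabMap s ι (s ⋙ T)) ≅ s ⋙ cokernel (stabMap s ι T) := by
  have h1 : stabMap s ι (s ⋙ T) ≫ Functor.whiskerRight Ψ.hom T
      = ((Functor.whiskeringLeft C C A).obj s).map (stabMap s ι T) := by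
    ext c
    simp [stabMap, ← hΨ c, T.map_comp]
  haveI : IsIso (Functor.whiskerRight Ψ.hom T) := inferInstanceAs (IsIso (Functor.isoWhiskerRight Ψ T).hom)
  exact (cokernelCompIsIso (stabMap s ι (s ⋙ T)) (Functor.whiskerRight Ψ.hom T)).symm ≪≫
    cokernelIsoOfEq h1 ≪≫
    (PreservesCokernel.iso ((Functor.whiskeringLeft C C A).obj s) (stabMap s ι T)).symm

lemma degLE_comp (Ψ : s ⋙ s ≅ s ⋙ s)
    (hΨ : ∀ c : C, s.map (ι.app c) ≫ Ψ.hom.app c = ι.app (s.obj c)) :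
    ∀ (d : ℕ) (T : C ⥤ A), degLE s ι d T → degLE s ι d (s ⋙ T) := by
  intro d
  induction d with
  | zero =>
    intro T h
    exact Functor.isZero _ fun c => (T.isZero_iff.1 h) (s.obj c)
  | succ d ih =>
    intro T h
    rcases h with h | h
    · exact Or.inl (Functor.isZero _ fun c => (T.isZero_iff.1 h) (s.obj c))
    · exact Or.inr (degLE_of_iso s ι d (cokerIso s ι Ψ hΨ T).symm (ih _ h))

lemma degLE_of_comp (Ψ : s ⋙ s ≅ s ⋙ s)
    (hΨ : ∀ c : C, s.map (ι.app c) ≫ Ψ.hom.app c = ι.app (s.obj c))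
    (hs : s.EssSurj) :
    ∀ (d : ℕ) (T : C ⥤ A), degLE s ι d (s ⋙ T) → degLE s ι d T := by
  have hz : ∀ T : C ⥤ A, IsZero (s ⋙ T) → IsZero T := by
    intro T h
    refine Functor.isZero _ fun c => ?_
    exact (((s ⋙ T).isZero_iff.1 h) (s.objPreimage c)).of_iso
      (T.mapIso (s.objObjPreimageIso c)).symm
  intro d
  induction d with
  | zero => exact fun T h => hz T h
  | succ d ih =>
    intro T h
    rcases h with h | h
    · exact Or.inl (hz T h)
    · exact Or.inr (ih _ (degLE_of_iso s ι d (cokerIso s ι Ψ hΨ T) h))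

end Aux

/-- Statement 5: let `(C, s, ι)` be a small category with an endofunctor `s` and a
natural transformation `ι : 𝟭 C ⟶ s` which is braidable, i.e. there exists a natural
isomorphism `Ψ : s ⋙ s ≅ s ⋙ s` with `ι ∗ id_s = Ψ ∘ (id_s ∗ ι)` (componentwise:
`Ψ_c ∘ s(ι_c) = ι_{s c}`).  Then for any functor `T : C ⥤ A` we have
`deg (T ∘ s) ≤ deg T`, with equality if `s` is essentially surjective on objects. -/
theorem deg_comp_self_le_of_braidable
    {C : Type u} [Category.{v} C] (s : C ⥤ C) (ι : 𝟭 C ⟶ s)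
    (hbraidable : ∃ Ψ : s ⋙ s ≅ s ⋙ s,
      ∀ c : C, s.map (ι.app c) ≫ Ψ.hom.app c = ι.app (s.obj c))
    (T : C ⥤ A) :
    deg s ι (s ⋙ T) ≤ deg s ι T ∧ (s.EssSurj → deg s ι (s ⋙ T) = deg s ι T) := by
  obtain ⟨Ψ, hΨ⟩ := hbraidable
  constructor
  · refine sInf_le_sInf ?_
    rintro e ⟨d, rfl, hd⟩
    exact ⟨d, rfl, degLE_comp s ι Ψ hΨ d T hd⟩
  · intro hs
    refine le_antisymm ?_ ?_
    · refine sInf_le_sInf ?_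
      rintro e ⟨d, rfl, hd⟩
      exact ⟨d, rfl, degLE_comp s ι Ψ hΨ d T hd⟩
    · refine sInf_le_sInf ?_
      rintro e ⟨d, rfl, hd⟩
      exact ⟨d, rfl, degLE_of_comp s ι Ψ hΨ hs d T hd⟩
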